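/- Let K be a field, A = K[x₁,…,xₙ], and Φ an automorphism of the monoid End A of K-algebra endomorphisms of A (with composition as multiplication). Then for every K-algebra endomorphism ψ of A, trdeg_K(image (Φ(ψ))) = trdeg_K(image ψ); that is, automorphisms of End A preserve the rank of endomorphisms. -/

import Mathlib

open MvPolynomial

/-- The transcendence degree of an algebra `A` over `K`: the supremum of cardinalities of
algebraically independent subsets (mirrors Mathlib's `Algebra.trdeg`). -/
noncomputable def algTrdeg (K A : Type*) [CommRing K] [CommRing A] [Algebra K A] : Cardinal :=
  ⨆ ι : { s : Set A // AlgebraicIndependent K ((↑) : s → A) }, Cardinal.mk ι.1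

open Cardinal

section Main
variable {K : Type} [Field K] {n : ℕ}

/-- exponent-bound injection : finsupps with sum ≤ B inject into functions to Fin (B+1) -/
theorem card_sumle_le (m B : ℕ) :
    #({d : Fin m →₀ ℕ | (d.sum fun _ e => e) ≤ B} : Set (Fin m →₀ ℕ)) ≤ ((B+1)^m : ℕ) := by
  have : #(Fin m → Fin (B+1)) = ((B+1)^m : ℕ) := by
    rw [Cardinal.mk_fintype, Fintype.card_fun, Fintype.card_fin, Fintype.card_fin]
  rw [← this]
  apply Cardinal.mk_le_of_injective (f := fun d =>
    fun i => (⟨min (d.1 i) B, by omega⟩ : Fin (B+1)))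
  intro d d' h
  apply Subtype.ext; apply Finsupp.ext; intro i
  have hd : ∀ (e : {d : Fin m →₀ ℕ | (d.sum fun _ e => e) ≤ B}), e.1 i ≤ B := by
    intro e
    refine le_trans ?_ e.2
    by_cases hi : i ∈ e.1.support
    · exact Finset.single_le_sum (f := fun j => e.1 j) (fun _ _ => Nat.zero_le _) hi
    · simp [Finsupp.notMem_support_iff.mp hi]
  have := congrFun h i
  simp only [Fin.mk.injEq] at this
  rw [min_eq_left (hd d), min_eq_left (hd d')] at this
  exact this

theorem no_indep_succ (y : Fin (n+1) → MvPolynomial (Fin n) K)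
    (hy : AlgebraicIndependent K y) : False := by
  classical
  set M : ℕ := Finset.univ.sup (fun i => (y i).totalDegree) with hM
  set c : ℕ := (n+1)*M + 1 with hc
  set D : ℕ := c^n + 1 with hD
  set B : ℕ := (n+1)*D*M with hB
  -- the monomial family
  set exps : (Fin (n+1) → Fin D) → (Fin (n+1) →₀ ℕ) :=
    fun t => Finsupp.equivFunOnFinite.symm (fun i => (t i : ℕ)) with hexps
  have exps_inj : Function.Injective exps := by
    intro t t' h
    funext i
    have := congrArg (fun d => Finsupp.equivFunOnFinite d i) h
    simpa [hexps] using Fin.ext this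
  set v : (Fin (n+1) → Fin D) → MvPolynomial (Fin n) K := fun t => aeval y (monomial (exps t) (1:K)) with hv
  have li1 : LinearIndependent K v := by
    have li0 : LinearIndependent K
        (fun d : (Fin (n+1) →₀ ℕ) => (monomial d (1:K) : MvPolynomial (Fin (n+1)) K)) := by
      have := (MvPolynomial.basisMonomials (Fin (n+1)) K).linearIndependent
      rwa [MvPolynomial.coe_basisMonomials] at this
    have li0' := li0.comp exps exps_inj
    have := li0'.map' (aeval y).toLinearMap (by
      rw [LinearMap.ker_eq_bot]
      have hinj := algebraicIndependent_iff_injective_aeval.mp hy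
      exact fun a b hab => hinj hab)
    have he : (⇑(aeval y).toLinearMap ∘ (fun d => (monomial d) (1:K)) ∘ exps) = v := by
      funext t; simp only [hv, AlgHom.toLinearMap_apply, Function.comp]
    rwa [he] at this
  -- total degree bound on v t
  have hdeg : ∀ t, (v t).totalDegree ≤ B := by
    intro t
    have h1 : v t = ∏ i : Fin (n+1), y i ^ (exps t) i := by
      rw [hv]
      show aeval y (monomial (exps t) (1:K)) = _
      rw [aeval_monomial, map_one, one_mul]
      exact Finsupp.prod_fintype _ _ (fun i => pow_zero _)
    rw [h1]
    refine le_trans (totalDegree_finset_prod _ _) ?_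
    have hterm : ∀ i ∈ (Finset.univ : Finset (Fin (n+1))),
        (y i ^ (exps t) i).totalDegree ≤ D * M := by
      intro i _
      refine le_trans (totalDegree_pow _ _) ?_
      have h2 : (exps t) i ≤ D := by
        have h3 : ((t i : ℕ)) < D := (t i).2
        simp only [hexps, Finsupp.equivFunOnFinite_symm_apply_apply]
        omega
      have h3 : (y i).totalDegree ≤ M :=
        Finset.le_sup (f := fun i => (y i).totalDegree) (Finset.mem_univ i)
      exact Nat.mul_le_mul h2 h3
    refine le_trans (Finset.sum_le_sum hterm) ?_
    rw [Finset.sum_const, smul_eq_mul, Finset.card_univ, Fintype.card_fin]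
    have hfin : (n+1) * (D * M) = B := by rw [hB]; ring
    omega
  -- pack into the finite-degree submodule
  set W := restrictTotalDegree (Fin n) K B with hW
  have li2 : LinearIndependent K
      (fun t => (⟨v t, (mem_restrictTotalDegree _ _ _).mpr (hdeg t)⟩ : W)) := by
    apply LinearIndependent.of_comp W.subtype
    have he2 : (⇑W.subtype ∘ fun t =>
        (⟨v t, (mem_restrictTotalDegree _ _ _).mpr (hdeg t)⟩ : W)) = v := rfl
    rwa [he2]
  have hcard1 : ((D^(n+1) : ℕ) : Cardinal) ≤ Module.rank K W := by
    have := li2.cardinal_lift_le_rank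
    rw [Cardinal.lift_le] at this
    rw [Cardinal.mk_fintype, Fintype.card_fun, Fintype.card_fin, Fintype.card_fin] at this
    exact this
  have hWle : Module.rank K W ≤ ((B+1)^n : ℕ) := by
    have hspan : W ≤ Submodule.span K ((fun d => (monomial d (1:K) : MvPolynomial (Fin n) K)) ''
        {d : Fin n →₀ ℕ | (d.sum fun _ e => e) ≤ B}) := by
      intro p hp
      rw [hW, mem_restrictTotalDegree] at hp
      rw [p.as_sum]
      apply Submodule.sum_mem
      intro d hd
      have hmono : (monomial d) (coeff d p) = (coeff d p) • (monomial d (1:K)) := by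
        rw [MvPolynomial.smul_monomial, smul_eq_mul, mul_one]
      rw [hmono]
      apply Submodule.smul_mem
      apply Submodule.subset_span
      exact ⟨d, le_trans (MvPolynomial.le_totalDegree hd) hp, rfl⟩
    calc Module.rank K W ≤ Module.rank K (Submodule.span K _) := Submodule.rank_mono hspan
      _ ≤ _ := rank_span_le _
      _ ≤ #({d : Fin n →₀ ℕ | (d.sum fun _ e => e) ≤ B} : Set (Fin n →₀ ℕ)) :=
          Cardinal.mk_image_le
      _ ≤ ((B+1)^n : ℕ) := card_sumle_le n B
  have hnat : D^(n+1) ≤ (B+1)^n := by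
    have := le_trans hcard1 hWle
    exact_mod_cast this
  -- numeric contradiction
  have hDpos : 1 ≤ D := by omega
  have h1 : B + 1 ≤ c * D := by
    have : c * D = (n+1)*M*D + D := by rw [hc]; ring
    rw [this, hB]
    have : (n+1)*D*M = (n+1)*M*D := by ring
    omega
  have h2 : (B+1)^n ≤ c^n * D^n := by
    rw [← mul_pow]
    exact Nat.pow_le_pow_left h1 n
  have h3 : D * D^n ≤ c^n * D^n := by
    have : D^(n+1) = D * D^n := by ring
    omega
  have hDn : 0 < D^n := Nat.pow_pos (by omega)
  have h4 : D ≤ c^n := Nat.le_of_mul_le_mul_right h3 hDn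
  omega

theorem indep_card_le {s : Set (MvPolynomial (Fin n) K)}
    (hs : AlgebraicIndependent K ((↑) : s → MvPolynomial (Fin n) K)) : #s ≤ (n : Cardinal) := by
  by_contra h
  push_neg at h
  have h1 : ((n+1 : ℕ) : Cardinal) ≤ #s := by
    rw [Cardinal.nat_succ]
    exact Order.succ_le_of_lt h
  have h2 : #(Fin (n+1)) ≤ #s := by rwa [Cardinal.mk_fin]
  obtain ⟨e⟩ := (Cardinal.le_def _ _).mp h2
  have hy := hs.comp e e.injective
  exact no_indep_succ _ hy

variable {S : Subalgebra K (MvPolynomial (Fin n) K)}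

theorem indep_val {t : Set ↥S} (ht : AlgebraicIndependent K ((↑) : t → ↥S)) :
    AlgebraicIndependent K ((↑) : (Subtype.val '' t : Set (MvPolynomial (Fin n) K)) →
      MvPolynomial (Fin n) K) := by
  have h1 := ht.map' (f := S.val) Subtype.val_injective
  refine h1.to_subtype_range' ?_
  rw [Set.range_comp]
  simp [Subtype.range_coe]

theorem indep_val_card {t : Set ↥S} :
    #(Subtype.val '' t : Set (MvPolynomial (Fin n) K)) = #t :=
  Cardinal.mk_image_eq Subtype.val_injective

theorem indep_sub {s : Set (MvPolynomial (Fin n) K)} (hsS : s ⊆ ↑S)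
    (hs : AlgebraicIndependent K ((↑) : s → MvPolynomial (Fin n) K)) :
    ∃ t : Set ↥S, AlgebraicIndependent K ((↑) : t → ↥S) ∧ #t = #s := by
  refine ⟨{a : ↥S | (a : MvPolynomial (Fin n) K) ∈ s}, ?_, ?_⟩
  · apply AlgebraicIndependent.of_comp S.val
    have hg : Function.Injective (fun a : {a : ↥S | (a : MvPolynomial (Fin n) K) ∈ s} => (⟨↑a.1, a.2⟩ : s)) := by
      intro a b hab
      have h2 : (↑↑a : MvPolynomial (Fin n) K) = ↑↑b :=
        congrArg (fun x : s => (x : MvPolynomial (Fin n) K)) hab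
      exact Subtype.ext (Subtype.ext h2)
    have := hs.comp _ hg
    exact this
  · refine Cardinal.mk_congr ⟨fun a => ⟨↑a.1, a.2⟩, fun b => ⟨⟨↑b, hsS b.2⟩, b.2⟩, ?_, ?_⟩
    · intro a; apply Subtype.ext; apply Subtype.ext; rfl
    · intro b; apply Subtype.ext; rfl

theorem rkS_bdd :
    BddAbove (Set.range fun ι : { s : Set ↥S // AlgebraicIndependent K ((↑) : s → ↥S) } => #ι.1) := by
  refine ⟨(n : Cardinal), ?_⟩
  rintro c ⟨⟨t, ht⟩, rfl⟩
  show #t ≤ (n : Cardinal)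
  rw [← indep_val_card (t := t)]
  exact indep_card_le (indep_val ht)

theorem le_rkS {s : Set (MvPolynomial (Fin n) K)} (hsS : s ⊆ ↑S)
    (hs : AlgebraicIndependent K ((↑) : s → MvPolynomial (Fin n) K)) :
    Cardinal.mk s ≤ algTrdeg K ↥S := by
  obtain ⟨t, ht, hc⟩ := indep_sub hsS hs
  rw [← hc]
  exact le_ciSup rkS_bdd ⟨t, ht⟩

theorem rkS_le {c : Cardinal}
    (h : ∀ s : Set (MvPolynomial (Fin n) K), s ⊆ ↑S →
      AlgebraicIndependent K ((↑) : s → MvPolynomial (Fin n) K) → #s ≤ c) :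
    algTrdeg K ↥S ≤ c := by
  refine ciSup_le' ?_
  rintro ⟨t, ht⟩
  have h1 := h (Subtype.val '' t) (by rintro x ⟨a, _, rfl⟩; exact a.2) (indep_val ht)
  rwa [indep_val_card] at h1

theorem rkS_le_n : algTrdeg K ↥S ≤ (n : Cardinal) :=
  rkS_le fun _ _ hs => indep_card_le hs

theorem exists_indep (k : ℕ) (h : (k : Cardinal) ≤ algTrdeg K ↥S) :
    ∃ s : Set (MvPolynomial (Fin n) K), s ⊆ ↑S ∧
      AlgebraicIndependent K ((↑) : s → MvPolynomial (Fin n) K) ∧ (k : Cardinal) ≤ #s := by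
  rcases Nat.eq_zero_or_pos k with hk | hk
  · subst hk
    exact ⟨∅, by simp, algebraicIndependent_empty, by simp⟩
  · obtain ⟨m, rfl⟩ : ∃ m, k = m + 1 := ⟨k-1, by omega⟩
    by_contra hcon
    push_neg at hcon
    have h1 : algTrdeg K ↥S ≤ ((m : ℕ) : Cardinal) := by
      refine ciSup_le' ?_
      rintro ⟨t, ht⟩
      have h2 := hcon (Subtype.val '' t) (by rintro x ⟨a, _, rfl⟩; exact a.2) (indep_val ht)
      rw [indep_val_card] at h2
      rw [Cardinal.nat_succ, Order.lt_succ_iff] at h2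
      exact h2
    have h4 := le_trans h h1
    rw [Nat.cast_le] at h4
    omega


variable (K n) in
abbrev EndA := MvPolynomial (Fin n) K →ₐ[K] MvPolynomial (Fin n) K

theorem mul_apply' (f g : EndA K n) (p : MvPolynomial (Fin n) K) : (f * g) p = f (g p) := rfl

/-- `γ` is injective on the range of `χ`, expressed monoid-theoretically. -/
def InjR (γ χ : EndA K n) : Prop := ∀ α β : EndA K n, γ * χ * α = γ * χ * β → χ * α = χ * β

/-- ∃ δ, ψ∘δ is injective on range χ.  Implies rank χ ≤ rank ψ, and is monoid-definable. -/
def RelR (ψ χ : EndA K n) : Prop := ∃ δ : EndA K n, InjR (ψ * δ) χ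

theorem injOn_of_InjR (hn : 0 < n) {γ χ : EndA K n} (h : InjR γ χ) :
    Set.InjOn ⇑γ ↑χ.range := by
  rintro u hu v hv huv
  obtain ⟨u₀, rfl⟩ := hu
  obtain ⟨v₀, rfl⟩ := hv
  set i0 : Fin n := ⟨0, hn⟩
  set α : EndA K n := aeval (Function.update X i0 u₀) with hα
  set β : EndA K n := aeval (Function.update X i0 v₀) with hβ
  have hαx : α (X i0) = u₀ := by rw [hα, aeval_X, Function.update_self]
  have hβx : β (X i0) = v₀ := by rw [hβ, aeval_X, Function.update_self]
  have hab : γ * χ * α = γ * χ * β := by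
    apply MvPolynomial.algHom_ext
    intro i
    by_cases hi : i = i0
    · subst hi
      show γ (χ (α (X i0))) = γ (χ (β (X i0)))
      rw [hαx, hβx]
      exact huv
    · show γ (χ (α (X i))) = γ (χ (β (X i)))
      rw [hα, hβ, aeval_X, aeval_X, Function.update_of_ne hi, Function.update_of_ne hi]
  have h2 := h α β hab
  have h3 : χ (α (X i0)) = χ (β (X i0)) := congrArg (fun φ : EndA K n => φ (X i0)) h2
  rwa [hαx, hβx] at h3

theorem rk_le_of_RelR (hn : 0 < n) {ψ χ : EndA K n} (h : RelR ψ χ) :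
    algTrdeg K ↥χ.range ≤ algTrdeg K ↥ψ.range := by
  obtain ⟨δ, hδ⟩ := h
  have hinj : Set.InjOn ⇑(ψ*δ) ↑χ.range := injOn_of_InjR hn hδ
  apply rkS_le
  intro s hsS hs
  have hadj : (Algebra.adjoin K (Set.range ((↑) : s → MvPolynomial (Fin n) K)) : Set (MvPolynomial (Fin n) K)) ⊆ ↑χ.range := by
    rw [Subtype.range_coe]
    exact Algebra.adjoin_le hsS
  have h1 : AlgebraicIndependent K (⇑(ψ*δ) ∘ ((↑) : s → MvPolynomial (Fin n) K)) :=
    hs.map (hinj.mono hadj)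
  have h2 := h1.to_subtype_range' (t := ⇑(ψ*δ) '' s)
    (by rw [Set.range_comp, Subtype.range_coe])
  have h3 : (⇑(ψ*δ) '' s) ⊆ ↑ψ.range := by
    rintro x ⟨a, ha, rfl⟩
    exact ⟨δ a, rfl⟩
  have h4 := le_rkS h3 h2
  rwa [Cardinal.mk_image_eq_of_injOn _ _ (hinj.mono hsS)] at h4

/-- the standard rank-k idempotent -/
noncomputable def ee (k : ℕ) : EndA K n :=
  aeval (fun i : Fin n => if (i : ℕ) < k then X i else 0)

theorem ee_X (k : ℕ) (i : Fin n) : ee (K := K) k (X i) = if (i : ℕ) < k then X i else 0 := by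
  rw [ee, aeval_X]

theorem ee_mul_ee {j k : ℕ} (hjk : j ≤ k) :
    ee (K := K) (n := n) j * ee k = ee j ∧ ee (K := K) (n := n) k * ee j = ee j := by
  constructor
  · apply MvPolynomial.algHom_ext
    intro i
    show ee j (ee k (X i)) = ee j (X i)
    simp only [ee_X]
    by_cases h1 : (i : ℕ) < j
    · rw [if_pos (lt_of_lt_of_le h1 hjk), if_pos h1, ee_X, if_pos h1]
    · by_cases h2 : (i : ℕ) < k
      · rw [if_pos h2, if_neg h1, ee_X, if_neg h1]
      · rw [if_neg h2, if_neg h1, map_zero]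
  · apply MvPolynomial.algHom_ext
    intro i
    show ee k (ee j (X i)) = ee j (X i)
    simp only [ee_X]
    by_cases h1 : (i : ℕ) < j
    · rw [if_pos h1, ee_X, if_pos (lt_of_lt_of_le h1 hjk)]
    · rw [if_neg h1, map_zero]

theorem ee_idem (k : ℕ) : ee (K := K) (n := n) k * ee k = ee k := (ee_mul_ee le_rfl).1

theorem ee_ne {j k : ℕ} (hjk : j < k) (hkn : j < n) :
    ee (K := K) (n := n) j ≠ ee k := by
  intro h
  have h1 := congrArg (fun φ : EndA K n => φ (X ⟨j, hkn⟩)) h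
  simp only [ee_X] at h1
  rw [if_neg (by simp), if_pos (by simpa using hjk)] at h1
  exact MvPolynomial.X_ne_zero _ h1.symm

theorem RelR_ee {ψ : EndA K n} (k : ℕ) (hkn : k ≤ n)
    (h : (k : Cardinal) ≤ algTrdeg K ↥ψ.range) : RelR ψ (ee k) := by
  obtain ⟨s, hsS, hs, hks⟩ := exists_indep k h
  have h2 : #(Fin k) ≤ #s := by rwa [Cardinal.mk_fin]
  obtain ⟨e⟩ := (Cardinal.le_def _ _).mp h2
  have hf : AlgebraicIndependent K
      (((↑) : s → MvPolynomial (Fin n) K) ∘ e) := hs.comp e e.injective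
  have hfr : ∀ i : Fin k, (((↑) : s → MvPolynomial (Fin n) K) ∘ e) i ∈ ψ.range :=
    fun i => hsS (e i).2
  choose g hg using fun i => (AlgHom.mem_range ψ).mp (hfr i)
  set δ : EndA K n := aeval (fun j : Fin n => if hj : (j : ℕ) < k then g ⟨j, hj⟩ else 0) with hδ
  refine ⟨δ, ?_⟩
  set emb : MvPolynomial (Fin k) K →ₐ[K] MvPolynomial (Fin n) K :=
    rename (Fin.castLE hkn) with hemb
  set prj : MvPolynomial (Fin n) K →ₐ[K] MvPolynomial (Fin k) K :=
    aeval (fun j : Fin n => if hj : (j : ℕ) < k then X ⟨j, hj⟩ else 0) with hprj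
  have hcomp : ∀ p, ee (K := K) k p = emb (prj p) := by
    intro p
    have : (ee (K := K) k : EndA K n) = emb.comp prj := by
      apply MvPolynomial.algHom_ext
      intro i
      rw [AlgHom.comp_apply, ee_X, hprj, aeval_X]
      by_cases hi : (i : ℕ) < k
      · rw [dif_pos hi, if_pos hi, hemb, rename_X]
        exact congrArg X (Fin.ext rfl)
      · rw [dif_neg hi, if_neg hi, map_zero]
    rw [this]; rfl
  have hkey : ∀ q : MvPolynomial (Fin k) K,
      (ψ * δ) (emb q) = aeval (((↑) : s → MvPolynomial (Fin n) K) ∘ e) q := by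
    intro q
    have : (ψ * δ).comp emb = aeval (((↑) : s → MvPolynomial (Fin n) K) ∘ e) := by
      apply MvPolynomial.algHom_ext
      intro i
      rw [AlgHom.comp_apply, hemb, rename_X, aeval_X, mul_apply', hδ, aeval_X]
      have hik : ((Fin.castLE hkn i : Fin n) : ℕ) < k := by
        simpa using i.2
      rw [dif_pos hik]
      have : (⟨((Fin.castLE hkn i : Fin n) : ℕ), hik⟩ : Fin k) = i := Fin.ext (by simp)
      rw [this, hg i]
    exact congrArg (fun φ => φ q) this
  intro α β hab
  apply MvPolynomial.algHom_ext
  intro i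
  show ee (K := K) k (α (X i)) = ee (K := K) k (β (X i))
  have h5 : (ψ * δ) (ee (K := K) k (α (X i))) = (ψ * δ) (ee (K := K) k (β (X i))) :=
    congrArg (fun φ : EndA K n => φ (X i)) hab
  rw [hcomp (α (X i)), hcomp (β (X i)), hkey, hkey] at h5
  have h6 := (algebraicIndependent_iff_injective_aeval.mp hf) h5
  rw [hcomp (α (X i)), hcomp (β (X i)), h6]

theorem idem_fix {f : EndA K n} (hf : f * f = f) {u : MvPolynomial (Fin n) K}
    (hu : u ∈ f.range) : f u = u := by
  obtain ⟨p, rfl⟩ := hu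
  exact congrArg (fun φ : EndA K n => φ p) hf

set_option synthInstance.maxHeartbeats 400000 in
theorem rk_lt_of_idem {f e : EndA K n} (hff : f * f = f) (hee : e * e = e)
    (hfe : f * e = f) (hef : e * f = f) (hne : f ≠ e) :
    algTrdeg K ↥f.range + 1 ≤ algTrdeg K ↥e.range := by
  -- range f ⊆ range e
  have hsub : (f.range : Set (MvPolynomial (Fin n) K)) ⊆ ↑e.range := by
    rintro u ⟨p, rfl⟩
    refine ⟨f p, ?_⟩
    exact congrArg (fun φ : EndA K n => φ p) hef
  -- f is not injective on range e
  have hninj : ¬ Set.InjOn ⇑f ↑e.range := by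
    intro hinj
    apply hne
    apply AlgHom.ext
    intro p
    have h1 : f (e p) = e p :=
      hinj (hsub ⟨e p, rfl⟩) ⟨p, rfl⟩ (idem_fix hff ⟨e p, rfl⟩)
    have h2 : f p = f (e p) := (congrArg (fun φ : EndA K n => φ p) hfe).symm
    rw [h2, h1]
  -- extract w ≠ 0 in range e with f w = 0
  rw [Set.InjOn] at hninj
  push_neg at hninj
  obtain ⟨u, hu, v, hv, huv, hne'⟩ := hninj
  set w := u - v with hw
  have hw0 : w ≠ 0 := sub_ne_zero_of_ne hne'
  have hwe : w ∈ e.range := e.range.sub_mem hu hv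
  have hfw : f w = 0 := by rw [hw, map_sub, huv, sub_self]
  have hwnf : w ∉ f.range := fun hwf => hw0 (by rw [← idem_fix hff hwf, hfw])
  -- get a finite rank value
  obtain ⟨m, hm⟩ := Cardinal.lt_aleph0.mp
    (lt_of_le_of_lt (rkS_le_n (S := f.range)) (Cardinal.nat_lt_aleph0 n))
  obtain ⟨s, hsf, hs, hms⟩ := exists_indep m (le_of_eq hm.symm)
  have hws : w ∉ s := fun h => hwnf (hsf h)
  -- w is transcendental over adjoin K s
  have htr : Transcendental (↥(Algebra.adjoin K
      (Set.range (((↑) : s → MvPolynomial (Fin n) K))))) w := by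
    rw [transcendental_iff]
    intro p hp
    have hBf : (Algebra.adjoin K (Set.range ((↑) : s → MvPolynomial (Fin n) K)) :
        Set (MvPolynomial (Fin n) K)) ⊆ ↑f.range := by
      rw [Subtype.range_coe]
      intro x hx
      exact Algebra.adjoin_le hsf hx
    have key : ∀ N (q : Polynomial (↥(Algebra.adjoin K
        (Set.range ((↑) : s → MvPolynomial (Fin n) K))))),
        q.natDegree ≤ N → Polynomial.aeval w q = 0 → q = 0 := by
      intro N
      induction N with
      | zero =>
        intro q hdeg hq
        have hq' := Polynomial.eq_C_of_natDegree_le_zero hdeg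
        rw [hq', Polynomial.aeval_C] at hq
        have : (q.coeff 0 : MvPolynomial (Fin n) K) = 0 := hq
        rw [hq']
        rw [show q.coeff 0 = 0 from Subtype.ext this, map_zero]
      | succ N ih =>
        intro q hdeg hq
        have hdecomp := q.divX_mul_X_add
        rw [← hdecomp] at hq
        rw [map_add (Polynomial.aeval w), map_mul (Polynomial.aeval w),
          Polynomial.aeval_X, Polynomial.aeval_C] at hq
        -- apply f
        have h3 := congrArg (⇑f) hq
        rw [map_add, map_mul, hfw, mul_zero, map_zero] at h3
        have h4 : f ((algebraMap _ (MvPolynomial (Fin n) K)) (q.coeff 0)) =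
            (algebraMap _ (MvPolynomial (Fin n) K)) (q.coeff 0) :=
          idem_fix hff (hBf (q.coeff 0).2)
        rw [h4, zero_add] at h3
        have h5 : q.coeff 0 = 0 := Subtype.ext h3
        rw [h5, map_zero, add_zero] at hq
        have h6 : Polynomial.aeval w q.divX = 0 := by
          rcases mul_eq_zero.mp hq with h | h
          · exact h
          · exact absurd h hw0
        have h7 : q.divX = 0 := ih q.divX (by
          have := Polynomial.natDegree_divX_eq_natDegree_tsub_one (p := q)
          omega) h6
        rw [← hdecomp, h7, h5, map_zero, zero_mul, zero_add]
    exact key p.natDegree p le_rfl hp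
  -- insert w into s
  have hopt := (hs.option_iff_transcendental w).mpr htr
  set s' : Set (MvPolynomial (Fin n) K) := insert w s with hs'
  have hins : AlgebraicIndependent K ((↑) : s' → MvPolynomial (Fin n) K) := by
    refine hopt.to_subtype_range' ?_
    ext x
    constructor
    · rintro ⟨o, rfl⟩
      cases o with
      | none => exact Set.mem_insert _ _
      | some a => exact Set.mem_insert_of_mem _ a.2
    · intro hx
      rcases Set.mem_insert_iff.mp (hs' ▸ hx) with rfl | hx
      · exact ⟨none, rfl⟩
      · exact ⟨some ⟨x, hx⟩, rfl⟩
  have hinse : s' ⊆ ↑e.range := by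
    intro x hx
    rcases Set.mem_insert_iff.mp (hs' ▸ hx) with rfl | hx
    · exact hwe
    · exact hsub (hsf hx)
  have hcard : #s' = #s + 1 := Cardinal.mk_insert hws
  have hfinal := le_rkS hinse hins
  rw [hcard] at hfinal
  rw [hm]
  calc (m : Cardinal) + 1 ≤ #s + 1 := add_le_add_left hms 1
    _ ≤ algTrdeg K ↥e.range := hfinal

theorem InjR_transport (Φ : EndA K n ≃* EndA K n) {γ χ : EndA K n} (h : InjR γ χ) :
    InjR (Φ γ) (Φ χ) := by
  intro α β hab
  obtain ⟨α₀, rfl⟩ := Φ.surjective α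
  obtain ⟨β₀, rfl⟩ := Φ.surjective β
  simp only [← map_mul] at hab
  have h1 := h α₀ β₀ (Φ.injective hab)
  have h2 := congrArg Φ h1
  simp only [map_mul] at h2
  exact h2

theorem RelR_transport (Φ : EndA K n ≃* EndA K n) {ψ χ : EndA K n} (h : RelR ψ χ) :
    RelR (Φ ψ) (Φ χ) := by
  obtain ⟨δ, hδ⟩ := h
  exact ⟨Φ δ, by rw [← map_mul]; exact InjR_transport Φ hδ⟩

theorem rk_phi_ee (Φ : EndA K n ≃* EndA K n) :
    ∀ k, k ≤ n → algTrdeg K ↥(Φ (ee (K := K) (n := n) k)).range = (k : Cardinal) := by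
  have hval : ∀ j : ℕ, ∃ m : ℕ, algTrdeg K ↥(Φ (ee (K := K) (n := n) j)).range = m := fun j =>
    Cardinal.lt_aleph0.mp (lt_of_le_of_lt rkS_le_n (Cardinal.nat_lt_aleph0 n))
  choose m hm using hval
  have hb : ∀ j, m j ≤ n := by
    intro j
    have h1 := rkS_le_n (S := (Φ (ee (K := K) (n := n) j)).range)
    rw [hm j] at h1
    exact_mod_cast h1
  have hmono : ∀ j k, j < k → k ≤ n → m j < m k := by
    intro j k hjk hkn
    have hidem : ∀ a : ℕ, Φ (ee (K := K) (n := n) a) * Φ (ee a) = Φ (ee a) := by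
      intro a; rw [← map_mul, ee_idem]
    have h1 := rk_lt_of_idem (hidem j) (hidem k)
      (by rw [← map_mul, (ee_mul_ee (le_of_lt hjk)).1])
      (by rw [← map_mul, (ee_mul_ee (le_of_lt hjk)).2])
      (fun h => ee_ne hjk (lt_of_lt_of_le hjk hkn) (Φ.injective h))
    rw [hm j, hm k] at h1
    have h2 : ((m j + 1 : ℕ) : Cardinal) ≤ ((m k : ℕ) : Cardinal) := by
      push_cast
      exact h1
    have h3 : m j + 1 ≤ m k := by exact_mod_cast h2
    omega
  have hlow : ∀ j, j ≤ n → j ≤ m j := by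
    intro j
    induction j with
    | zero => intro _; omega
    | succ j ih =>
      intro hj
      have h1 := hmono j (j+1) (by omega) hj
      have h2 := ih (by omega)
      omega
  have hup : ∀ d j, j + d = n → m j ≤ j := by
    intro d
    induction d with
    | zero =>
      intro j hj
      have := hb j
      omega
    | succ d ih =>
      intro j hj
      have h2 := ih (j+1) (by omega)
      have h3 := hmono j (j+1) (by omega) (by omega)
      omega
  intro k hkn
  have hmk : m k = k := by
    have h1 := hlow k hkn
    have h2 := hup (n - k) k (by omega)
    omega
  rw [hm k, hmk]

theorem rank_le_transport (hn : 0 < n) (Φ : EndA K n ≃* EndA K n) (ψ : EndA K n) :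
    algTrdeg K ↥ψ.range ≤ algTrdeg K ↥(Φ ψ).range := by
  obtain ⟨k, hk⟩ := Cardinal.lt_aleph0.mp
    (lt_of_le_of_lt (rkS_le_n (S := ψ.range)) (Cardinal.nat_lt_aleph0 n))
  have hkn : k ≤ n := by
    have h1 := rkS_le_n (S := ψ.range)
    rw [hk] at h1
    exact_mod_cast h1
  have h1 : RelR ψ (ee k) := RelR_ee k hkn hk.ge
  have h2 := RelR_transport Φ h1
  have h3 := rk_le_of_RelR hn h2
  rw [rk_phi_ee Φ k hkn] at h3
  rw [hk]
  exact h3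

end Main

/-- Automorphisms of the endomorphism monoid of `K[x₁,…,xₙ]` preserve the rank
(transcendence degree of the image) of endomorphisms. -/
theorem stmt_4 (K : Type) [Field K] (n : ℕ)
    (Φ : (MvPolynomial (Fin n) K →ₐ[K] MvPolynomial (Fin n) K) ≃*
         (MvPolynomial (Fin n) K →ₐ[K] MvPolynomial (Fin n) K))
    (ψ : MvPolynomial (Fin n) K →ₐ[K] MvPolynomial (Fin n) K) :
    algTrdeg K ↥(Φ ψ).range = algTrdeg K ↥ψ.range := by
  rcases Nat.eq_zero_or_pos n with hn | hn
  · subst hn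
    haveI : Subsingleton (MvPolynomial (Fin 0) K →ₐ[K] MvPolynomial (Fin 0) K) :=
      ⟨fun f g => MvPolynomial.algHom_ext (fun i => i.elim0)⟩
    rw [Subsingleton.elim (Φ ψ) ψ]
  · have h1 := rank_le_transport hn Φ ψ
    have h2 := rank_le_transport hn Φ.symm (Φ ψ)
    rw [MulEquiv.symm_apply_apply] at h2
    exact le_antisymm h2 h1
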